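/- Let p be a prime, G a finite group, N a normal subgroup of G, and T a p-subgroup of G. Write NT for the subgroup N ⊔ T of G. Then for every subgroup P of G, O^p(N_{NT}(P)) = O^p(N_N(P)), where N_H(P) denotes the normalizer of P in H; consequently O^p(Aut_{NT}(P)) = O^p(Aut_N(P)). -/

import Mathlib

/-- The subgroup of `MulAut ↥P` consisting of automorphisms of `P` induced by
conjugation by elements of `H` normalizing `P`. -/
def autBy {G : Type*} [Group G] (H P : Subgroup G) : Subgroup (MulAut ↥P) :=
  Subgroup.closure
    {φ : MulAut ↥P | ∃ h ∈ H, h ∈ Subgroup.normalizer (P : Set G) ∧ ∀ x : ↥P, (φ x : G) = h⁻¹ * x * h}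

/-- `O^p(K)`: the subgroup generated by the elements of `K` of order coprime to `p`. -/
def Op (p : ℕ) {M : Type*} [Group M] (K : Subgroup M) : Subgroup M :=
  Subgroup.closure {x : M | x ∈ K ∧ Nat.Coprime (orderOf x) p}

/-- Every element of `N ⊔ T` has a `p`-power power lying in `N`. -/
lemma key_pow_mem {p : ℕ} {G : Type*} [Group G] (N : Subgroup G) [N.Normal]
    (T : Subgroup G) (hT : IsPGroup p T) {h : G} (hh : h ∈ N ⊔ T) :
    ∃ b : ℕ, h ^ p ^ b ∈ N := by
  let q := QuotientGroup.mk' N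
  have hmap : (N ⊔ T).map q = T.map q := by
    rw [Subgroup.map_sup,
      (Subgroup.map_eq_bot_iff N).mpr (le_of_eq (QuotientGroup.ker_mk' N).symm), bot_sup_eq]
  have hqh : q h ∈ T.map q := hmap ▸ Subgroup.mem_map_of_mem q hh
  obtain ⟨b, hb⟩ := (hT.map q) ⟨q h, hqh⟩
  refine ⟨b, ?_⟩
  have : q (h ^ p ^ b) = 1 := by
    have := congrArg (Subtype.val) hb
    push_cast at this
    simpa [map_pow] using this
  rwa [← QuotientGroup.ker_mk' N, MonoidHom.mem_ker]

lemma mem_of_coprime {p : ℕ} {G : Type*} [Group G] (N : Subgroup G) [N.Normal]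
    (T : Subgroup G) (hT : IsPGroup p T) {x : G} (hx : x ∈ N ⊔ T)
    (hcop : Nat.Coprime (orderOf x) p) : x ∈ N := by
  obtain ⟨b, hb⟩ := key_pow_mem N T hT hx
  obtain ⟨m, hm⟩ := exists_pow_eq_self_of_coprime (x := x) ((hcop.symm.pow_left b))
  rw [← hm]
  exact Subgroup.pow_mem N hb m

lemma autBy_exists {G : Type*} [Group G] {H P : Subgroup G} {φ : MulAut ↥P}
    (hφ : φ ∈ autBy H P) :
    ∃ h ∈ H, h ∈ Subgroup.normalizer (P : Set G) ∧ ∀ x : ↥P, (φ x : G) = h⁻¹ * x * h := by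
  induction hφ using Subgroup.closure_induction with
  | mem φ hφ => exact hφ
  | one => exact ⟨1, H.one_mem, (Subgroup.normalizer (P : Set G)).one_mem, fun x => by simp⟩
  | mul φ ψ _ _ ihφ ihψ =>
    obtain ⟨h, hH, hn, hf⟩ := ihφ
    obtain ⟨k, kH, kn, kf⟩ := ihψ
    refine ⟨k * h, H.mul_mem kH hH, (Subgroup.normalizer (P : Set G)).mul_mem kn hn, fun x => ?_⟩
    have : ((φ * ψ) x : G) = (φ (ψ x) : G) := rfl
    rw [this, hf, kf]
    group
  | inv φ _ ih =>
    obtain ⟨h, hH, hn, hf⟩ := ih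
    refine ⟨h⁻¹, H.inv_mem hH, (Subgroup.normalizer (P : Set G)).inv_mem hn, fun x => ?_⟩
    have := hf (φ⁻¹ x)
    rw [MulAut.apply_inv_self] at this
    rw [this]
    group

lemma pow_formula {G : Type*} [Group G] {P : Subgroup G} {φ : MulAut ↥P} {h : G}
    (hf : ∀ x : ↥P, (φ x : G) = h⁻¹ * x * h) (k : ℕ) :
    ∀ x : ↥P, ((φ ^ k) x : G) = (h ^ k)⁻¹ * x * h ^ k := by
  induction k with
  | zero => intro x; simp
  | succ k ih =>
    intro x
    have : ((φ ^ (k + 1)) x : G) = (φ ((φ ^ k) x) : G) := by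
      rw [pow_succ']; rfl
    rw [this, hf, ih]
    rw [pow_succ]
    group

theorem stmt2 (p : ℕ) (hp : p.Prime) {G : Type*} [Group G] [Finite G]
    (N : Subgroup G) [N.Normal] (T : Subgroup G) (hT : IsPGroup p T) :
    ∀ P : Subgroup G,
      Op p ((N ⊔ T) ⊓ Subgroup.normalizer (P : Set G)) = Op p (N ⊓ Subgroup.normalizer (P : Set G)) ∧
        Op p (autBy (N ⊔ T) P) = Op p (autBy N P) := by
  intro P
  constructor
  · unfold Op
    congr 1
    ext x
    simp only [Set.mem_setOf_eq, Subgroup.mem_inf]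
    constructor
    · rintro ⟨⟨hNT, hnorm⟩, hcop⟩
      exact ⟨⟨mem_of_coprime N T hT hNT hcop, hnorm⟩, hcop⟩
    · rintro ⟨⟨hN, hnorm⟩, hcop⟩
      exact ⟨⟨Subgroup.mem_sup_left hN, hnorm⟩, hcop⟩
  · unfold Op
    congr 1
    ext φ
    simp only [Set.mem_setOf_eq]
    constructor
    · rintro ⟨hφ, hcop⟩
      refine ⟨?_, hcop⟩
      obtain ⟨h, hNT, hnorm, hf⟩ := autBy_exists hφ
      obtain ⟨b, hb⟩ := key_pow_mem N T hT hNT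
      obtain ⟨m, hm⟩ := exists_pow_eq_self_of_coprime (x := φ) (hcop.symm.pow_left b)
      apply Subgroup.subset_closure
      refine ⟨h ^ (p ^ b * m), ?_, Subgroup.pow_mem _ hnorm _, ?_⟩
      · rw [pow_mul]
        exact Subgroup.pow_mem N hb m
      · intro x
        rw [show φ = φ ^ (p ^ b * m) by rw [pow_mul]; exact hm.symm]
        exact pow_formula hf (p ^ b * m) x
    · rintro ⟨hφ, hcop⟩
      refine ⟨?_, hcop⟩
      revert hφ
      apply Subgroup.closure_mono
      rintro ψ ⟨h, hN, hrest⟩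
      exact ⟨h, Subgroup.mem_sup_left hN, hrest⟩
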